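/- Let B₂ be a group, A₂ a normal subgroup of B₂, B₁ a finite-index subgroup of B₂, and A₁ := B₁ ∩ A₂; assume A₁ has finite index in A₂ and A₁ is normal in B₁. Let φ : B₁ → B₂ be a homomorphism with φ(A₁) ⊆ A₂; let φ' : A₁ → A₂ be its restriction and φ̄ : B₁A₂/A₂ → B₂/A₂ the induced homomorphism (b·A₂ ↦ φ(b)·A₂). If R(φ̄) < ∞, the fixed point set Fix(φ̄) = {x ∈ B₁A₂/A₂ : φ̄(x) = x} is finite, and R(φ') = ∞, then R(φ) = ∞. -/

import Mathlib

/-- The Reidemeister number (in `ℕ∞`) of the generalized twisted conjugacy relation on `G`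
determined by a "subgroup inclusion" `ι : H →* G` and a homomorphism `φ : H →* G`:
`a ∼ b ↔ ∃ γ ∈ H, a = ι(γ)·b·φ(γ)⁻¹`. -/
noncomputable def reidemeisterNumber {H G : Type*} [Group H] [Group G]
    (ι : H →* G) (φ : H →* G) : ℕ∞ :=
  ENat.card (Quot (fun a b : G => ∃ γ : H, a = ι γ * b * (φ γ)⁻¹))

/-- The twisted conjugacy relation is an equivalence relation. -/
theorem twistedConj_equivalence {H G : Type*} [Group H] [Group G]
    (ι : H →* G) (φ : H →* G) :
    Equivalence (fun a b : G => ∃ γ : H, a = ι γ * b * (φ γ)⁻¹) := by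
  constructor
  · intro a; exact ⟨1, by simp⟩
  · rintro a b ⟨γ, rfl⟩
    exact ⟨γ⁻¹, by simp [mul_assoc]⟩
  · rintro a b c ⟨γ, rfl⟩ ⟨δ, rfl⟩
    exact ⟨γ * δ, by simp [mul_assoc]⟩

/-- part (2) of Lemma 4.6 of the paper.
`A₂ ⊴ B₂`, `B₁ ≤_f B₂`, `A₁ = B₁ ∩ A₂ ≤_f A₂` with `A₁ ⊴ B₁`; `φ : B₁ → B₂` satisfies
`φ(A₁) ⊆ A₂`, with restriction `φ' : A₁ → A₂` and induced homomorphism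
`φ̄ : B₁A₂/A₂ → B₂/A₂`.  If `R(φ̄) < ∞`, `Fix(φ̄)` is finite and `R(φ') = ∞`,
then `R(φ) = ∞`. -/
theorem reidemeister_infinite_of_restriction_infinite
    {B₂ : Type*} [Group B₂] (A₂ : Subgroup B₂) [A₂.Normal]
    (B₁ : Subgroup B₂) [B₁.FiniteIndex]
    (hA₁fi : ((B₁ ⊓ A₂).subgroupOf A₂).FiniteIndex)
    (hA₁norm : ((B₁ ⊓ A₂).subgroupOf B₁).Normal)
    (φ : B₁ →* B₂)
    (hφA : ∀ b : B₁, (b : B₂) ∈ A₂ → φ b ∈ A₂)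
    (φ' : ↥((B₁ ⊓ A₂).subgroupOf A₂) →* A₂)
    (hφ' : ∀ (a : A₂) (h : (a : B₂) ∈ B₁),
      ((φ' ⟨a, Subgroup.mem_subgroupOf.mpr (Subgroup.mem_inf.mpr ⟨h, a.2⟩)⟩ : A₂) : B₂)
        = φ ⟨(a : B₂), h⟩)
    (φbar : ↥(B₁.map (QuotientGroup.mk' A₂)) →* B₂ ⧸ A₂)
    (hφbar : ∀ b : B₁,
      φbar ⟨QuotientGroup.mk' A₂ (b : B₂), Subgroup.mem_map.mpr ⟨(b : B₂), b.2, rfl⟩⟩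
        = QuotientGroup.mk' A₂ (φ b))
    (hfin : reidemeisterNumber (B₁.map (QuotientGroup.mk' A₂)).subtype φbar ≠ ⊤)
    (hFix : {x : ↥(B₁.map (QuotientGroup.mk' A₂)) | φbar x = (x : B₂ ⧸ A₂)}.Finite)
    (hinf : reidemeisterNumber ((B₁ ⊓ A₂).subgroupOf A₂).subtype φ' = ⊤) :
    reidemeisterNumber B₁.subtype φ = ⊤ := by
  classical
  set r : B₂ → B₂ → Prop := fun a b => ∃ γ : B₁, a = B₁.subtype γ * b * (φ γ)⁻¹ with hrdef
  set r' : ↥A₂ → ↥A₂ → Prop := fun a b =>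
    ∃ γ : ↥((B₁ ⊓ A₂).subgroupOf A₂),
      a = ((B₁ ⊓ A₂).subgroupOf A₂).subtype γ * b * (φ' γ)⁻¹ with hr'def
  by_contra hne
  -- Q is finite
  have hQfin : Finite (Quot r) := by
    by_contra h
    rw [not_finite_iff_infinite] at h
    exact hne (@ENat.card_eq_top_of_infinite _ h)
  have hreq : Equivalence r := twistedConj_equivalence B₁.subtype φ
  -- `φ'` agrees with `φ` on values
  have hφ'val : ∀ (γ : ↥((B₁ ⊓ A₂).subgroupOf A₂)) (h : ((γ : ↥A₂) : B₂) ∈ B₁),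
      ((φ' γ : ↥A₂) : B₂) = φ ⟨((γ : ↥A₂) : B₂), h⟩ := by
    intro γ h
    rw [← hφ' (γ : ↥A₂) h]
  -- the map between quotients
  have hmap : ∀ x y : ↥A₂, r' x y → r (x : B₂) (y : B₂) := by
    rintro x y ⟨γ, rfl⟩
    have hγB : ((γ : ↥A₂) : B₂) ∈ B₁ := (Subgroup.mem_subgroupOf.mp γ.2).1
    refine ⟨⟨((γ : ↥A₂) : B₂), hγB⟩, ?_⟩
    have hv := hφ'val γ hγB
    push_cast
    rw [hv]
    rfl
  set F : Quot r' → Quot r := Quot.map (fun a : ↥A₂ => (a : B₂)) hmap with hFdef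
  have hne' : Nonempty (Quot r') := ⟨Quot.mk _ 1⟩
  -- section of F
  set s : Quot r → Quot r' := fun q =>
    if h : ∃ p, F p = q then h.choose else Classical.arbitrary _ with hsdef
  have hs : ∀ q' : Quot r', F (s (F q')) = F q' := by
    intro q'
    have h : ∃ p, F p = F q' := ⟨q', rfl⟩
    rw [hsdef]; simp only [dif_pos h]; exact h.choose_spec
  -- a twisting element relating the representative of q' to that of s (F q')
  have hkey : ∀ q' : Quot r', ∃ γ : B₁,
      ((Quot.out q' : ↥A₂) : B₂)
        = B₁.subtype γ * ((Quot.out (s (F q')) : ↥A₂) : B₂) * (φ γ)⁻¹ := by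
    intro q'
    have h1 : Quot.mk r ((Quot.out q' : ↥A₂) : B₂) = F q' := congrArg F (Quot.out_eq q')
    have h2 : Quot.mk r ((Quot.out (s (F q')) : ↥A₂) : B₂) = F (s (F q')) :=
      congrArg F (Quot.out_eq (s (F q')))
    have h3 := h2.trans ((hs q').trans h1.symm)
    exact hreq.eqvGen_iff.mp (Quot.eq.mp h3.symm)
  have hFixfin : Finite ↥{x : ↥(B₁.map (QuotientGroup.mk' A₂)) | φbar x = (x : B₂ ⧸ A₂)} :=
    hFix
  -- the twisting element lies in Fix
  have hγFix : ∀ (γ : B₁) (α β : ↥A₂),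
      ((α : B₂) = B₁.subtype γ * (β : B₂) * (φ γ)⁻¹) →
      (⟨QuotientGroup.mk' A₂ (γ : B₂), Subgroup.mem_map.mpr ⟨(γ : B₂), γ.2, rfl⟩⟩ :
        ↥(B₁.map (QuotientGroup.mk' A₂)))
        ∈ {x : ↥(B₁.map (QuotientGroup.mk' A₂)) | φbar x = (x : B₂ ⧸ A₂)} := by
    intro γ α β hαβ
    have hα : QuotientGroup.mk' A₂ ((α : B₂)) = 1 := by
      rw [QuotientGroup.mk'_apply]
      exact (QuotientGroup.eq_one_iff _).mpr α.2
    have hβ : QuotientGroup.mk' A₂ ((β : B₂)) = 1 := by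
      rw [QuotientGroup.mk'_apply]
      exact (QuotientGroup.eq_one_iff _).mpr β.2
    have h1 : QuotientGroup.mk' A₂ (φ γ) = QuotientGroup.mk' A₂ (γ : B₂) := by
      have hc := congrArg (QuotientGroup.mk' A₂) hαβ
      rw [map_mul, map_mul, map_inv, hα, hβ, mul_one] at hc
      exact (mul_inv_eq_one.mp hc.symm).symm
    show φbar _ = _
    rw [hφbar γ, h1]
  -- the injection
  set G : Quot r' →
      Quot r × ↥{x : ↥(B₁.map (QuotientGroup.mk' A₂)) | φbar x = (x : B₂ ⧸ A₂)} := fun q' =>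
    (F q', ⟨_, hγFix (hkey q').choose (Quot.out q') (Quot.out (s (F q')))
      (hkey q').choose_spec⟩) with hGdef
  have hGinj : Function.Injective G := by
    intro q₁ q₂ h
    have hF12 : F q₁ = F q₂ := congrArg Prod.fst h
    have hγeq : QuotientGroup.mk' A₂ (((hkey q₁).choose : B₁) : B₂)
        = QuotientGroup.mk' A₂ (((hkey q₂).choose : B₁) : B₂) := by
      have hc := congrArg
        (fun x : Quot r × ↥{x : ↥(B₁.map (QuotientGroup.mk' A₂)) | φbar x = (x : B₂ ⧸ A₂)} =>
          ((x.2 : ↥(B₁.map (QuotientGroup.mk' A₂))) : B₂ ⧸ A₂)) h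
      exact hc
    set γ₁ : B₁ := (hkey q₁).choose with hγ₁
    set γ₂ : B₁ := (hkey q₂).choose with hγ₂
    have h1 := (hkey q₁).choose_spec
    have h2 := (hkey q₂).choose_spec
    rw [← hγ₁] at h1
    rw [← hγ₂, ← hF12] at h2
    -- a := γ₁⁻¹ γ₂ ∈ A₂
    have haA : ((γ₁⁻¹ * γ₂ : B₁) : B₂) ∈ A₂ := by
      have hm : ((γ₁ : B₂))⁻¹ * (γ₂ : B₂) ∈ A₂ := by
        apply QuotientGroup.eq.mp
        simpa [QuotientGroup.mk'_apply] using hγeq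
      simpa using hm
    set a : B₁ := γ₁⁻¹ * γ₂ with ha
    set b : B₁ := γ₁ * a * γ₁⁻¹ with hb
    have hbA : ((b : B₁) : B₂) ∈ A₂ := by
      have hc := Subgroup.Normal.conj_mem ‹A₂.Normal› _ haA (γ₁ : B₂)
      rw [hb]
      push_cast
      convert hc using 2
    -- show r' (out q₂) (out q₁)
    have hrel : r' (Quot.out q₂) (Quot.out q₁) := by
      have hmem : (⟨(b : B₂), hbA⟩ : ↥A₂) ∈ (B₁ ⊓ A₂).subgroupOf A₂ :=
        Subgroup.mem_subgroupOf.mpr (Subgroup.mem_inf.mpr ⟨b.2, hbA⟩)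
      refine ⟨⟨⟨(b : B₂), hbA⟩, hmem⟩, ?_⟩
      have hφ'b : ((φ' ⟨⟨(b : B₂), hbA⟩, hmem⟩ : ↥A₂) : B₂) = φ b := by
        rw [hφ'val ⟨⟨(b : B₂), hbA⟩, hmem⟩ b.2]
      apply Subtype.ext
      push_cast
      rw [hφ'b, h1, h2]
      have hγ2v : (γ₂ : B₂) = (γ₁ : B₂) * (a : B₂) := by
        rw [ha]; push_cast; group
      have hγ2 : γ₂ = γ₁ * a := by rw [ha]; group
      have hφγ2 : φ γ₂ = φ γ₁ * φ a := by rw [hγ2, map_mul]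
      have hbv : ((b : B₁) : B₂) = (γ₁ : B₂) * (a : B₂) * (γ₁ : B₂)⁻¹ := by
        rw [hb]; push_cast; group
      have hφb : φ b = φ γ₁ * φ a * (φ γ₁)⁻¹ := by
        rw [hb, map_mul, map_mul, map_inv]
      show (B₁.subtype γ₂ : B₂) * _ * _ = ((b : B₁) : B₂) * ((B₁.subtype γ₁ : B₂) * _ * _) * _
      rw [hφγ2, hφb]
      show (γ₂ : B₂) * _ * _ = ((b : B₁) : B₂) * ((γ₁ : B₂) * _ * _) * _
      rw [hγ2v, hbv]
      group
    have e1 : q₁ = Quot.mk r' (Quot.out q₁) := (Quot.out_eq q₁).symm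
    have e2 : q₂ = Quot.mk r' (Quot.out q₂) := (Quot.out_eq q₂).symm
    rw [e1, e2]
    exact (Quot.sound hrel).symm
  -- Quot r' is finite, contradiction
  have hQ'fin : Finite (Quot r') := Finite.of_injective G hGinj
  have hcard : ENat.card (Quot r') ≠ ⊤ := by
    letI := Fintype.ofFinite (Quot r')
    rw [ENat.card_eq_coe_fintype_card]
    exact ENat.coe_ne_top _
  exact hcard hinf
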